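/- Let O be a complete DVR of mixed characteristic (0,2). The O-algebra O[X,Y]/(X² − Y² − 2(X−Y), XY − 2X² + 4X) is a free O-module of rank 4, commutative and local, and its reduction modulo the maximal ideal of O is isomorphic to k[X,Y]/(X² − Y², XY). -/

import Mathlib

set_option synthInstance.maxHeartbeats 1000000
set_option maxHeartbeats 1000000

open MvPolynomial IsLocalRing

set_option maxHeartbeats 8000000 in
/-- For `O` a complete discrete valuation ring of mixed characteristic `(0,2)`, the
`O`-algebra `O[X,Y]/(X² − Y² − 2(X−Y), XY − 2X² + 4X)` is a free `O`-module of rank 4,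
commutative and local, and its reduction modulo the maximal ideal of `O` is isomorphic to
`k[X,Y]/(X² − Y², XY)` where `k` is the residue field of `O`. -/
theorem stmt_17 (O : Type*) [CommRing O] [IsDomain O] [IsDiscreteValuationRing O]
    [CharZero O] [IsAdicComplete (maximalIdeal O) O] (h2 : ¬ IsUnit (2 : O)) :
    let R := MvPolynomial (Fin 2) O ⧸
      Ideal.span {(X 0 : MvPolynomial (Fin 2) O) ^ 2 - X 1 ^ 2 - 2 * (X 0 - X 1),
        X 0 * X 1 - 2 * X 0 ^ 2 + 4 * X 0}
    Module.Free O R ∧ Module.finrank O R = 4 ∧ (∀ a b : R, a * b = b * a) ∧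
    IsLocalRing R ∧
    Nonempty ((R ⧸ Ideal.map (algebraMap O R) (maximalIdeal O)) ≃+*
      (MvPolynomial (Fin 2) (ResidueField O) ⧸
        Ideal.span {(X 0 : MvPolynomial (Fin 2) (ResidueField O)) ^ 2 - X 1 ^ 2, X 0 * X 1})) := by
  intro R
  set f : MvPolynomial (Fin 2) O := X 0 ^ 2 - X 1 ^ 2 - 2 * (X 0 - X 1) with hf_def
  set g : MvPolynomial (Fin 2) O := X 0 * X 1 - 2 * X 0 ^ 2 + 4 * X 0 with hg_def
  set I : Ideal (MvPolynomial (Fin 2) O) := Ideal.span {f, g} with hI_def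
  have hfI : f ∈ I := Ideal.subset_span (by simp)
  have hgI : g ∈ I := Ideal.subset_span (by simp)
  let mk : MvPolynomial (Fin 2) O →+* R := Ideal.Quotient.mk I
  set x : R := mk (X 0) with hx_def
  set y : R := mk (X 1) with hy_def
  have hmkf : mk f = 0 := Ideal.Quotient.eq_zero_iff_mem.2 hfI
  have hmkg : mk g = 0 := Ideal.Quotient.eq_zero_iff_mem.2 hgI
  have hf0 : x ^ 2 - y ^ 2 - 2 * (x - y) = 0 := by
    have := hmkf
    simp only [hf_def, map_sub, map_mul, map_pow, map_ofNat] at this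
    exact this
  have hg0 : x * y - 2 * x ^ 2 + 4 * x = 0 := by
    have := hmkg
    simp only [hg_def, map_add, map_sub, map_mul, map_pow, map_ofNat] at this
    exact this
  -- E1, E2
  have E1 : y ^ 2 = x ^ 2 - 2 * x + 2 * y := by linear_combination -hf0
  have E2 : x * y = 2 * x ^ 2 - 4 * x := by linear_combination hg0
  -- 3 is a unit in O
  have h2m : (2 : O) ∈ maximalIdeal O := h2
  have hu3 : IsUnit (3 : O) := by
    by_contra h3
    have h3m : (3 : O) ∈ maximalIdeal O := h3
    have h1 : (1 : O) = 3 - 2 := by norm_num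
    have : (1 : O) ∈ maximalIdeal O := h1 ▸ Submodule.sub_mem _ h3m h2m
    exact (Ideal.ne_top_iff_one _).1 (IsLocalRing.maximalIdeal.isMaximal O).ne_top this
  have hu3R : IsUnit (3 : R) := by
    have : IsUnit (algebraMap O R 3) := hu3.map (algebraMap O R)
    rwa [map_ofNat] at this
  -- E3 : x^3 = 6x^2 - 8x
  have hpoly : (3 : MvPolynomial (Fin 2) O) * (X 0 ^ 3 - 6 * X 0 ^ 2 + 8 * X 0)
      = (-X 0) * f + (6 - X 1 - 2 * X 0) * g := by
    rw [hf_def, hg_def]; ring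
  have E3 : x ^ 3 = 6 * x ^ 2 - 8 * x := by
    have h30 : (3 : R) * (x ^ 3 - 6 * x ^ 2 + 8 * x) = 0 := by
      have := congrArg mk hpoly
      simp only [map_add, map_sub, map_mul, map_pow, map_neg, map_ofNat] at this
      rw [hmkf, hmkg] at this
      simpa using this
    have hc : x ^ 3 - 6 * x ^ 2 + 8 * x = 0 :=
      hu3R.mul_left_cancel (by rw [mul_zero, h30])
    linear_combination hc
  -- E4 : x^2 y = 8x^2 - 16x
  have E4 : x ^ 2 * y = 8 * x ^ 2 - 16 * x := by
    linear_combination x * E2 + 2 * E3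
  -- the four characters
  have mkchar : ∀ (p₀ p₁ : O), aeval (![p₀, p₁] : Fin 2 → O) f = 0 →
      aeval (![p₀, p₁] : Fin 2 → O) g = 0 →
      ∃ χ : R →ₐ[O] O, χ x = p₀ ∧ χ y = p₁ ∧ (∀ r : O, χ (algebraMap O R r) = r) := by
    intro p₀ p₁ hfv hgv
    have hker : ∀ a ∈ I, aeval (![p₀, p₁] : Fin 2 → O) a = 0 := by
      intro a ha
      rw [hI_def] at ha
      refine Submodule.span_induction ?_ ?_ ?_ ?_ ha
      · rintro z (rfl | rfl)
        · exact hfv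
        · exact hgv
      · simp
      · intro a b _ _ h1 h2'; rw [map_add, h1, h2', add_zero]
      · intro a b _ hb
        rw [smul_eq_mul, map_mul, hb, mul_zero]
    refine ⟨Ideal.Quotient.liftₐ I (aeval ![p₀, p₁]) hker, ?_, ?_, ?_⟩
    · show Ideal.Quotient.liftₐ I (aeval ![p₀, p₁]) hker (mk (X 0)) = p₀
      rw [Ideal.Quotient.liftₐ_apply]
      erw [Ideal.Quotient.lift_mk]
      simp
    · show Ideal.Quotient.liftₐ I (aeval ![p₀, p₁]) hker (mk (X 1)) = p₁
      rw [Ideal.Quotient.liftₐ_apply]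
      erw [Ideal.Quotient.lift_mk]
      simp
    · intro r
      rw [AlgHom.commutes]
      simp
  obtain ⟨χ1, hχ1x, hχ1y, hχ1c⟩ := mkchar 0 0 (by simp [hf_def]) (by simp [hg_def])
  obtain ⟨χ2, hχ2x, hχ2y, hχ2c⟩ := mkchar 0 2
    (by simp [hf_def]; try ring) (by simp [hg_def]; try ring)
  obtain ⟨χ3, hχ3x, hχ3y, hχ3c⟩ := mkchar 2 0
    (by simp [hf_def]; try ring) (by simp [hg_def]; try ring)
  obtain ⟨χ4, hχ4x, hχ4y, hχ4c⟩ := mkchar 4 4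
    (by simp [hf_def]; try ring) (by simp [hg_def]; try ring)
  -- the basis vectors
  set v : Fin 4 → R := ![1, x, y, x ^ 2] with hv_def
  have h2O : (2 : O) ≠ 0 := two_ne_zero
  -- linear independence
  have hli : LinearIndependent O v := by
    rw [Fintype.linearIndependent_iff]
    intro c hc
    rw [Fin.sum_univ_four] at hc
    simp only [hv_def, Matrix.cons_val_zero, Matrix.cons_val_one, Matrix.head_cons,
      Matrix.cons_val_two, Matrix.tail_cons, Matrix.cons_val_three, Matrix.head_fin_const] at hc
    have apply_char : ∀ (χ : R →ₐ[O] O), (∀ r : O, χ (algebraMap O R r) = r) →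
        c 0 + c 1 * χ x + c 2 * χ y + c 3 * (χ x) ^ 2 = 0 := by
      intro χ hχc
      have := congrArg χ hc
      simp only [map_add, map_smul, map_one, map_pow, map_zero, smul_eq_mul] at this
      rw [mul_one] at this
      exact this
    have q1 := apply_char χ1 hχ1c
    have q2 := apply_char χ2 hχ2c
    have q3 := apply_char χ3 hχ3c
    have q4 := apply_char χ4 hχ4c
    rw [hχ1x, hχ1y] at q1
    rw [hχ2x, hχ2y] at q2
    rw [hχ3x, hχ3y] at q3
    rw [hχ4x, hχ4y] at q4
    -- q1 : c0 = 0, q2 : c0 + 2 c2 = 0, q3 : c0 + 2 c1 + 4 c3 = 0, q4 : c0 + 4c1 + 4c2 + 16c3 = 0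
    have hc0 : c 0 = 0 := by linear_combination q1
    have hc2 : c 2 = 0 := by
      have h : (2 : O) * c 2 = 2 * 0 := by linear_combination q2 - q1
      exact mul_left_cancel₀ h2O h
    have hc3 : c 3 = 0 := by
      have h : (2 : O) * ((2 : O) * ((2 : O) * c 3)) = 2 * (2 * (2 * 0)) := by
        linear_combination q4 - 2 * q3 + q1 - 4 * hc2
      exact mul_left_cancel₀ h2O (mul_left_cancel₀ h2O (mul_left_cancel₀ h2O h))
    have hc1 : c 1 = 0 := by
      have h : (2 : O) * c 1 = 2 * 0 := by linear_combination q3 - q1 - 4 * hc3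
      exact mul_left_cancel₀ h2O h
    intro i
    fin_cases i <;> assumption
  -- spanning
  set V : Submodule O R := Submodule.span O (Set.range v) with hV_def
  have hmem1 : (1 : R) ∈ V := Submodule.subset_span ⟨0, by simp [hv_def]⟩
  have hmemx : x ∈ V := Submodule.subset_span ⟨1, by simp [hv_def]⟩
  have hmemy : y ∈ V := Submodule.subset_span ⟨2, by simp [hv_def]⟩
  have hmemx2 : x ^ 2 ∈ V := Submodule.subset_span ⟨3, by simp [hv_def]⟩
  have smul_na : ∀ (a : O) (r : R), a • r = algebraMap O R a * r := fun a r => Algebra.smul_def a r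
  have hmulx : ∀ r ∈ V, r * x ∈ V := by
    intro r hr
    refine Submodule.span_induction ?_ ?_ ?_ ?_ hr
    · rintro z ⟨i, rfl⟩
      fin_cases i
      · simpa [hv_def] using hmemx
      · show v 1 * x ∈ V
        have : v 1 * x = x ^ 2 := by simp [hv_def]; ring
        rw [this]; exact hmemx2
      · show v 2 * x ∈ V
        have e : v 2 * x = (-4 : O) • x + (2 : O) • x ^ 2 := by
          simp only [smul_na, map_neg, map_ofNat]
          show y * x = _
          linear_combination E2
        rw [e]; exact add_mem (V.smul_mem _ hmemx) (V.smul_mem _ hmemx2)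
      · show v 3 * x ∈ V
        have e : v 3 * x = (-8 : O) • x + (6 : O) • x ^ 2 := by
          simp only [smul_na, map_neg, map_ofNat]
          show x ^ 2 * x = _
          linear_combination E3
        rw [e]; exact add_mem (V.smul_mem _ hmemx) (V.smul_mem _ hmemx2)
    · simp
    · intro a b _ _ ha hb; rw [add_mul]; exact add_mem ha hb
    · intro a r _ hrV; rw [smul_mul_assoc]; exact V.smul_mem a hrV
  have hmuly : ∀ r ∈ V, r * y ∈ V := by
    intro r hr
    refine Submodule.span_induction ?_ ?_ ?_ ?_ hr
    · rintro z ⟨i, rfl⟩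
      fin_cases i
      · simpa [hv_def] using hmemy
      · show v 1 * y ∈ V
        have e : v 1 * y = (-4 : O) • x + (2 : O) • x ^ 2 := by
          simp only [smul_na, map_neg, map_ofNat]
          show x * y = _
          linear_combination E2
        rw [e]; exact add_mem (V.smul_mem _ hmemx) (V.smul_mem _ hmemx2)
      · show v 2 * y ∈ V
        have e : v 2 * y = (-2 : O) • x + (2 : O) • y + (1 : O) • x ^ 2 := by
          simp only [smul_na, map_neg, map_ofNat, map_one]
          show y * y = _
          linear_combination E1
        rw [e]
        exact add_mem (add_mem (V.smul_mem _ hmemx) (V.smul_mem _ hmemy)) (V.smul_mem _ hmemx2)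
      · show v 3 * y ∈ V
        have e : v 3 * y = (-16 : O) • x + (8 : O) • x ^ 2 := by
          simp only [smul_na, map_neg, map_ofNat]
          show x ^ 2 * y = _
          linear_combination E4
        rw [e]; exact add_mem (V.smul_mem _ hmemx) (V.smul_mem _ hmemx2)
    · simp
    · intro a b _ _ ha hb; rw [add_mul]; exact add_mem ha hb
    · intro a r _ hrV; rw [smul_mul_assoc]; exact V.smul_mem a hrV
  have hspan : ∀ r : R, r ∈ V := by
    intro r
    obtain ⟨p, rfl⟩ := Ideal.Quotient.mk_surjective (I := I) r
    induction p using MvPolynomial.induction_on with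
    | C a =>
      have e : Ideal.Quotient.mk I (C a) = a • (1 : R) := by
        rw [smul_na, mul_one]; rfl
      rw [e]; exact V.smul_mem a hmem1
    | add p q hp hq => rw [map_add]; exact add_mem hp hq
    | mul_X p i hp =>
      rw [map_mul]
      fin_cases i
      · exact hmulx _ hp
      · exact hmuly _ hp
  have htop : ⊤ ≤ Submodule.span O (Set.range v) := fun r _ => hspan r
  let B : Module.Basis (Fin 4) O R := Module.Basis.mk hli htop
  have hfree : Module.Free O R := Module.Free.of_basis B
  have hfinite : Module.Finite O R := Module.Finite.of_basis B
  have hrank : Module.finrank O R = 4 := by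
    rw [Module.finrank_eq_card_basis B, Fintype.card_fin]
  -- locality
  haveI := hfinite
  haveI hint : Algebra.IsIntegral O R := Algebra.IsIntegral.of_finite O R
  have hker0 : ∀ a ∈ I, aeval (fun _ : Fin 2 => (0 : ResidueField O)) a = 0 := by
    intro a ha
    rw [hI_def] at ha
    refine Submodule.span_induction ?_ ?_ ?_ ?_ ha
    · rintro z (rfl | rfl)
      · simp [hf_def]
      · simp [hg_def]
    · simp
    · intro a b _ _ h1 h2'; rw [map_add, h1, h2', add_zero]
    · intro a b _ hb; rw [smul_eq_mul, map_mul, hb, mul_zero]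
  set χ0 : R →ₐ[O] ResidueField O :=
    Ideal.Quotient.liftₐ I (aeval fun _ => 0) hker0 with hχ0_def
  have hχ0mk : ∀ p : MvPolynomial (Fin 2) O,
      χ0 (mk p) = algebraMap O (ResidueField O) (constantCoeff p) := by
    intro p
    rw [hχ0_def, Ideal.Quotient.liftₐ_apply]
    erw [Ideal.Quotient.lift_mk]
    exact aeval_zero' p
  have hχ0surj : Function.Surjective χ0 := by
    intro z
    obtain ⟨w, rfl⟩ := Ideal.Quotient.mk_surjective z
    exact ⟨algebraMap O R w, by rw [AlgHom.commutes]; rfl⟩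
  set K : Ideal R := RingHom.ker χ0 with hK_def
  have hKmax : K.IsMaximal := RingHom.ker_isMaximal_of_surjective χ0 hχ0surj
  have huniq : ∀ M' : Ideal R, M'.IsMaximal → M' = K := by
    intro M' hM'
    haveI := hM'
    have hcomax : (M'.comap (algebraMap O R)).IsMaximal :=
      Ideal.isMaximal_comap_of_isIntegral_of_isMaximal M'
    have hcoeq : M'.comap (algebraMap O R) = maximalIdeal O :=
      IsLocalRing.eq_maximalIdeal hcomax
    have hJle : Ideal.map (algebraMap O R) (maximalIdeal O) ≤ M' :=
      Ideal.map_le_iff_le_comap.2 hcoeq.ge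
    set π : R →+* R ⧸ M' := Ideal.Quotient.mk M' with hπ_def
    have h2F : (2 : R ⧸ M') = 0 := by
      have h := Ideal.Quotient.eq_zero_iff_mem.2 (hJle (Ideal.mem_map_of_mem _ h2m))
      rwa [map_ofNat] at h
    have a1 : (π y) ^ 2 = (π x) ^ 2 - 2 * π x + 2 * π y := by
      have := congrArg π E1
      simpa only [map_sub, map_add, map_mul, map_pow, map_ofNat] using this
    have a2 : π x * π y = 2 * (π x) ^ 2 - 4 * π x := by
      have := congrArg π E2
      simpa only [map_sub, map_add, map_mul, map_pow, map_ofNat] using this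
    have huw : π x * π y = 0 := by
      linear_combination a2 + ((π x) ^ 2 - 2 * π x) * h2F
    have hw2 : (π y) ^ 2 = (π x) ^ 2 := by
      linear_combination a1 + (π y - π x) * h2F
    have hu3F : (π x) ^ 3 = 0 := by
      linear_combination (-(π x)) * hw2 + (π y) * huw
    have hu0 : π x = 0 := (pow_eq_zero_iff (M₀ := R ⧸ M') (by norm_num : (3:ℕ) ≠ 0)).1 hu3F
    have hw0 : π y = 0 := by
      have h : (π y) ^ 2 = 0 := by rw [hw2, hu0]; ring
      exact (pow_eq_zero_iff (M₀ := R ⧸ M') (by norm_num : (2:ℕ) ≠ 0)).1 h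
    have hle : K ≤ M' := by
      intro a ha
      obtain ⟨p, rfl⟩ := Ideal.Quotient.mk_surjective (I := I) a
      rw [hK_def, RingHom.mem_ker] at ha
      have hcp : constantCoeff p ∈ maximalIdeal O := by
        have := (hχ0mk p) ▸ ha
        exact Ideal.Quotient.eq_zero_iff_mem.1 this
      -- compute π (mk p)
      have hτ : π (mk p) = @algebraMap O (R ⧸ M') _ (Ideal.Quotient.semiring M') _ (constantCoeff p) := by
        set τ : MvPolynomial (Fin 2) O →ₐ[O] R ⧸ M' :=
          ((Ideal.Quotient.mkₐ O M').comp (Ideal.Quotient.mkₐ O I)) with hτ_def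
        have h1 : τ = aeval (τ ∘ X) := aeval_unique (S₁ := R ⧸ M') τ
        have h2 : (τ ∘ X) = fun _ => (0 : R ⧸ M') := by
          funext i
          fin_cases i
          · exact hu0
          · exact hw0
        have h3 : τ p = @algebraMap O (R ⧸ M') _ (Ideal.Quotient.semiring M') _ (constantCoeff p) := by
          rw [h1, h2]; exact aeval_zero' p
        exact h3
      have hmem : algebraMap O R (constantCoeff p) ∈ M' :=
        hJle (Ideal.mem_map_of_mem _ hcp)
      have : π (mk p) = 0 := by
        rw [hτ, IsScalarTower.algebraMap_apply O R (R ⧸ M')]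
        exact Ideal.Quotient.eq_zero_iff_mem.2 hmem
      exact Ideal.Quotient.eq_zero_iff_mem.1 this
    exact (hKmax.eq_of_le hM'.ne_top hle).symm
  have hlocal : IsLocalRing R :=
    IsLocalRing.of_unique_max_ideal ⟨K, hKmax, huniq⟩
  -- the residue isomorphism
  refine ⟨hfree, hrank, fun a b => mul_comm a b, hlocal, ?_⟩
  set m : Ideal O := maximalIdeal O with hm_def
  set Mc : Ideal (MvPolynomial (Fin 2) O) := Ideal.map (C : O →+* _) m with hMc_def
  have hAlg : (algebraMap O R) = mk.comp (C : O →+* MvPolynomial (Fin 2) O) := rfl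
  have hJ : Ideal.map (algebraMap O R) m = Ideal.map mk Mc := by
    rw [hAlg, hMc_def, Ideal.map_map]
  have step1 : (R ⧸ Ideal.map (algebraMap O R) m) ≃+*
      MvPolynomial (Fin 2) O ⧸ (I ⊔ Mc) :=
    (Ideal.quotEquivOfEq hJ).trans (DoubleQuot.quotQuotEquivQuotSup I Mc)
  have step2 : (MvPolynomial (Fin 2) O ⧸ (I ⊔ Mc)) ≃+*
      (MvPolynomial (Fin 2) O ⧸ Mc) ⧸ Ideal.map (Ideal.Quotient.mk Mc) I :=
    (Ideal.quotEquivOfEq (sup_comm I Mc)).trans (DoubleQuot.quotQuotEquivQuotSup Mc I).symm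
  -- base change equivalence
  set Erq : MvPolynomial (Fin 2) (ResidueField O) ≃+* (MvPolynomial (Fin 2) O ⧸ Mc) :=
    (MvPolynomial.quotientEquivQuotientMvPolynomial (σ := Fin 2) m).toRingEquiv with hErq_def
  have hEX : ∀ i : Fin 2, Erq (X i) = Ideal.Quotient.mk Mc (X i) := by
    intro i
    rw [hErq_def]
    show (MvPolynomial.quotientEquivQuotientMvPolynomial (σ := Fin 2) m) (X i) = _
    unfold MvPolynomial.quotientEquivQuotientMvPolynomial
    simp; rfl
  set A : MvPolynomial (Fin 2) (ResidueField O) := X 0 ^ 2 - X 1 ^ 2 with hA_def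
  set B : MvPolynomial (Fin 2) (ResidueField O) := X 0 * X 1 with hB_def
  have hfeq : Ideal.Quotient.mk Mc f = Ideal.Quotient.mk Mc (X 0 ^ 2 - X 1 ^ 2) := by
    rw [Ideal.Quotient.mk_eq_mk_iff_sub_mem]
    have h : f - (X 0 ^ 2 - X 1 ^ 2) = -((C (2 : O)) * (X 0 - X 1)) := by
      rw [hf_def, map_ofNat]; ring
    rw [h]
    exact neg_mem (Ideal.mul_mem_right _ _ (Ideal.mem_map_of_mem C h2m))
  have hgeq : Ideal.Quotient.mk Mc g = Ideal.Quotient.mk Mc (X 0 * X 1) := by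
    rw [Ideal.Quotient.mk_eq_mk_iff_sub_mem]
    have h : g - X 0 * X 1 = (C (2 : O)) * (2 * X 0 - X 0 ^ 2) := by
      rw [hg_def, map_ofNat]; ring
    rw [h]
    exact Ideal.mul_mem_right _ _ (Ideal.mem_map_of_mem C h2m)
  have hErqA : Erq A = Ideal.Quotient.mk Mc f := by
    rw [hA_def, map_sub, map_pow, map_pow, hEX 0, hEX 1, hfeq]
    rw [map_sub, map_pow, map_pow]
  have hErqB : Erq B = Ideal.Quotient.mk Mc g := by
    rw [hB_def, map_mul, hEX 0, hEX 1, hgeq, map_mul]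
  have himg : Ideal.map (Ideal.Quotient.mk Mc) I =
      Ideal.map (Erq : MvPolynomial (Fin 2) (ResidueField O) →+* _) (Ideal.span {A, B}) := by
    rw [hI_def, Ideal.map_span, Ideal.map_span, Set.image_insert_eq, Set.image_singleton,
      Set.image_insert_eq, Set.image_singleton]
    simp only [RingEquiv.coe_toRingHom, hErqA, hErqB]
  have step3 : (MvPolynomial (Fin 2) (ResidueField O) ⧸ Ideal.span {A, B}) ≃+*
      (MvPolynomial (Fin 2) O ⧸ Mc) ⧸ Ideal.map (Ideal.Quotient.mk Mc) I :=
    Ideal.quotientEquiv _ _ Erq himg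
  exact ⟨(step1.trans step2).trans step3.symm⟩
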